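/- For every λ ∈ (0, 1) and C ≥ 0 there exists a constant C' = C'(λ, C) < ∞ such that the following holds: let ρ ∈ [0, 1] and let f : (0, 1] → [0, ∞) satisfy f(t₂) ≤ exp(C·ρ·√(t₂ − t₁))·f(t₁) + C·√(t₂ − t₁) for all 0 < t₁ ≤ t₂ ≤ 1 with t₁ ≥ λ·t₂. Then f(t₂) ≤ exp(C'·ρ·√(t₂ − t₁))·f(t₁) + C'·√(t₂ − t₁) for all 0 < t₁ ≤ t₂ ≤ 1. -/

import Mathlib

/-- Key inductive telescoping lemma: if the distortion bound holds on relative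
intervals `[λ t₂, t₂]`, then for `t₁ ≥ λ^k t₂` we get a bound with the
uniform constant `M = C / (1 - √λ)`. -/
lemma stmt_8_key (lam : ℝ) (hlam₀ : 0 < lam) (hlam₁ : lam < 1) (C : ℝ) (hC : 0 ≤ C)
    (ρ : ℝ) (hρ0 : 0 ≤ ρ) (f : ℝ → ℝ)
    (hf : ∀ t ∈ Set.Ioc (0:ℝ) 1, 0 ≤ f t)
    (hstep : ∀ t₁ t₂ : ℝ, 0 < t₁ → t₁ ≤ t₂ → t₂ ≤ 1 → lam * t₂ ≤ t₁ →
      f t₂ ≤ Real.exp (C * ρ * Real.sqrt (t₂ - t₁)) * f t₁ + C * Real.sqrt (t₂ - t₁)) :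
    ∀ k : ℕ, ∀ t₁ t₂ : ℝ, 0 < t₁ → t₁ ≤ t₂ → t₂ ≤ 1 → lam ^ k * t₂ ≤ t₁ →
      f t₂ ≤ Real.exp ((C / (1 - Real.sqrt lam)) * ρ * Real.sqrt (t₂ - t₁)) *
        (f t₁ + (C / (1 - Real.sqrt lam)) * Real.sqrt (t₂ - t₁)) := by
  have hsl0 : 0 ≤ Real.sqrt lam := Real.sqrt_nonneg lam
  have hsl1 : Real.sqrt lam < 1 := by
    rw [show (1:ℝ) = Real.sqrt 1 by simp]
    exact Real.sqrt_lt_sqrt hlam₀.le hlam₁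
  have hden : 0 < 1 - Real.sqrt lam := by linarith
  set M : ℝ := C / (1 - Real.sqrt lam) with hM
  have hM0 : 0 ≤ M := div_nonneg hC hden.le
  have hMeq : C + M * Real.sqrt lam = M := by
    rw [hM]
    field_simp [hden.ne']
    ring
  have hCM : C ≤ M := by nlinarith [mul_nonneg hM0 hsl0]
  intro k
  induction k with
  | zero =>
    intro t₁ t₂ ht₁ h12 h21 hk
    simp only [pow_zero, one_mul] at hk
    have : t₁ = t₂ := le_antisymm h12 hk
    subst this
    simp
  | succ k ih =>
    intro t₁ t₂ ht₁ h12 h21 hk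
    have husq : 0 ≤ t₂ - t₁ := by linarith
    set u : ℝ := Real.sqrt (t₂ - t₁) with hu
    have hu0 : 0 ≤ u := Real.sqrt_nonneg _
    by_cases hcase : lam * t₂ ≤ t₁
    · -- one-step case
      have h1 := hstep t₁ t₂ ht₁ h12 h21 hcase
      have hf1 : 0 ≤ f t₁ := hf t₁ ⟨ht₁, le_trans h12 h21⟩
      have hexp1 : (1:ℝ) ≤ Real.exp (M * ρ * u) :=
        Real.one_le_exp (mul_nonneg (mul_nonneg hM0 hρ0) hu0)
      have hmono : Real.exp (C * ρ * u) ≤ Real.exp (M * ρ * u) :=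
        Real.exp_le_exp.2 (by nlinarith [mul_le_mul_of_nonneg_right hCM (mul_nonneg hρ0 hu0)])
      calc f t₂ ≤ Real.exp (C * ρ * u) * f t₁ + C * u := h1
        _ ≤ Real.exp (M * ρ * u) * f t₁ + Real.exp (M * ρ * u) * (M * u) := by
            have h3 : C * u ≤ M * u := mul_le_mul_of_nonneg_right hCM hu0
            have h4 : M * u ≤ Real.exp (M * ρ * u) * (M * u) :=
              le_mul_of_one_le_left (mul_nonneg hM0 hu0) hexp1
            have h5 := mul_le_mul_of_nonneg_right hmono hf1
            linarith
        _ = Real.exp (M * ρ * u) * (f t₁ + M * u) := by ring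
    · -- telescoping case: split at s = lam * t₂
      push_neg at hcase
      set s : ℝ := lam * t₂ with hs
      have hs0 : 0 < s := mul_pos hlam₀ (lt_of_lt_of_le ht₁ h12)
      have hs1 : s ≤ 1 := le_trans (by nlinarith) h21
      have hst : t₁ ≤ s := hcase.le
      have hkih : lam ^ k * s ≤ t₁ := by
        rw [hs]; rw [pow_succ] at hk; linarith [hk]
      have ihs := ih t₁ s ht₁ hst hs1 hkih
      have hmain := hstep s t₂ hs0 (by nlinarith) h21 (le_refl _)
      -- bounds on the sub-gaps
      have hb1 : Real.sqrt (t₂ - s) ≤ u := by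
        apply Real.sqrt_le_sqrt; rw [hs]; nlinarith
      have hb2 : Real.sqrt (s - t₁) ≤ Real.sqrt lam * u := by
        rw [hu, ← Real.sqrt_mul hlam₀.le]
        apply Real.sqrt_le_sqrt; rw [hs]; nlinarith
      set v : ℝ := Real.sqrt (t₂ - s) with hv
      set w : ℝ := Real.sqrt (s - t₁) with hw
      have hv0 : 0 ≤ v := Real.sqrt_nonneg _
      have hw0 : 0 ≤ w := Real.sqrt_nonneg _
      have hf1 : 0 ≤ f t₁ := hf t₁ ⟨ht₁, le_trans h12 h21⟩
      have hexpsum : C * ρ * v + M * ρ * w ≤ M * ρ * u := by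
        have h1 : C * ρ * v ≤ C * ρ * u :=
          mul_le_mul_of_nonneg_left hb1 (mul_nonneg hC hρ0)
        have h2 : M * ρ * w ≤ M * ρ * (Real.sqrt lam * u) :=
          mul_le_mul_of_nonneg_left hb2 (mul_nonneg hM0 hρ0)
        nlinarith [mul_nonneg hρ0 hu0]
      have hexp1 : (1:ℝ) ≤ Real.exp (M * ρ * u) :=
        Real.one_le_exp (mul_nonneg (mul_nonneg hM0 hρ0) hu0)
      have hE : Real.exp (C * ρ * v) * Real.exp (M * ρ * w) ≤ Real.exp (M * ρ * u) := by
        rw [← Real.exp_add]; exact Real.exp_le_exp.2 hexpsum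
      have hpos1 : 0 ≤ f t₁ + M * w := add_nonneg hf1 (mul_nonneg hM0 hw0)
      calc f t₂ ≤ Real.exp (C * ρ * v) * f s + C * v := hmain
        _ ≤ Real.exp (C * ρ * v) * (Real.exp (M * ρ * w) * (f t₁ + M * w)) + C * v := by
            have := mul_le_mul_of_nonneg_left ihs (Real.exp_nonneg (C * ρ * v))
            linarith
        _ = (Real.exp (C * ρ * v) * Real.exp (M * ρ * w)) * (f t₁ + M * w) + C * v := by ring
        _ ≤ Real.exp (M * ρ * u) * (f t₁ + M * w) + C * v := by
            have := mul_le_mul_of_nonneg_right hE hpos1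
            linarith
        _ ≤ Real.exp (M * ρ * u) * (f t₁ + M * (Real.sqrt lam * u)) +
              Real.exp (M * ρ * u) * (C * u) := by
            have h1 : M * w ≤ M * (Real.sqrt lam * u) :=
              mul_le_mul_of_nonneg_left hb2 hM0
            have h2 : C * v ≤ C * u := mul_le_mul_of_nonneg_left hb1 hC
            have h3 : C * u ≤ Real.exp (M * ρ * u) * (C * u) :=
              le_mul_of_one_le_left (mul_nonneg hC hu0) hexp1
            have h4 := mul_le_mul_of_nonneg_left h1 (Real.exp_nonneg (M * ρ * u))
            linarith [h2.trans h3]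
        _ = Real.exp (M * ρ * u) * (f t₁ + (M * Real.sqrt lam + C) * u) := by ring
        _ = Real.exp (M * ρ * u) * (f t₁ + M * u) := by rw [show M * Real.sqrt lam + C = M by linarith [hMeq]]

theorem stmt_8 (lam : ℝ) (hlam₀ : 0 < lam) (hlam₁ : lam < 1) (C : ℝ) (hC : 0 ≤ C) :
    ∃ C' : ℝ, 0 < C' ∧
      ∀ (ρ : ℝ), 0 ≤ ρ → ρ ≤ 1 →
      ∀ f : ℝ → ℝ,
        (∀ t ∈ Set.Ioc (0:ℝ) 1, 0 ≤ f t) →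
        (∀ t₁ t₂ : ℝ, 0 < t₁ → t₁ ≤ t₂ → t₂ ≤ 1 → lam * t₂ ≤ t₁ →
          f t₂ ≤ Real.exp (C * ρ * Real.sqrt (t₂ - t₁)) * f t₁ +
            C * Real.sqrt (t₂ - t₁)) →
        ∀ t₁ t₂ : ℝ, 0 < t₁ → t₁ ≤ t₂ → t₂ ≤ 1 →
          f t₂ ≤ Real.exp (C' * ρ * Real.sqrt (t₂ - t₁)) * f t₁ +
            C' * Real.sqrt (t₂ - t₁) := by
  have hsl0 : 0 ≤ Real.sqrt lam := Real.sqrt_nonneg lam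
  have hsl1 : Real.sqrt lam < 1 := by
    rw [show (1:ℝ) = Real.sqrt 1 by simp]
    exact Real.sqrt_lt_sqrt hlam₀.le hlam₁
  have hden : 0 < 1 - Real.sqrt lam := by linarith
  set M : ℝ := C / (1 - Real.sqrt lam) with hM
  have hM0 : 0 ≤ M := div_nonneg hC hden.le
  refine ⟨M * Real.exp M + 1, by positivity, ?_⟩
  intro ρ hρ0 hρ1 f hf hstep t₁ t₂ ht₁ h12 h21
  -- find k with lam ^ k * t₂ ≤ t₁
  obtain ⟨k, hk⟩ := exists_pow_lt_of_lt_one ht₁ hlam₁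
  have hk' : lam ^ k * t₂ ≤ t₁ := by
    calc lam ^ k * t₂ ≤ lam ^ k * 1 :=
          mul_le_mul_of_nonneg_left h21 (pow_nonneg hlam₀.le k)
      _ = lam ^ k := mul_one _
      _ ≤ t₁ := hk.le
  have key := stmt_8_key lam hlam₀ hlam₁ C hC ρ hρ0 f hf hstep k t₁ t₂ ht₁ h12 h21 hk'
  set u : ℝ := Real.sqrt (t₂ - t₁) with hu
  have hu0 : 0 ≤ u := Real.sqrt_nonneg _
  have hu1 : u ≤ 1 := by
    rw [hu, show (1:ℝ) = Real.sqrt 1 by simp]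
    exact Real.sqrt_le_sqrt (by linarith)
  have hf1 : 0 ≤ f t₁ := hf t₁ ⟨ht₁, le_trans h12 h21⟩
  have hC' : M ≤ M * Real.exp M + 1 := by
    nlinarith [Real.one_le_exp (le_of_lt (lt_of_lt_of_le zero_lt_one (Real.one_le_exp hM0))), Real.one_le_exp hM0]
  have hmono : Real.exp (M * ρ * u) ≤ Real.exp ((M * Real.exp M + 1) * ρ * u) := by
    apply Real.exp_le_exp.2
    nlinarith [mul_nonneg hρ0 hu0]
  have hMexp : Real.exp (M * ρ * u) ≤ Real.exp M := by
    apply Real.exp_le_exp.2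
    nlinarith [mul_nonneg hM0 hρ0]
  calc f t₂ ≤ Real.exp (M * ρ * u) * (f t₁ + M * u) := key
    _ = Real.exp (M * ρ * u) * f t₁ + Real.exp (M * ρ * u) * (M * u) := by ring
    _ ≤ Real.exp ((M * Real.exp M + 1) * ρ * u) * f t₁ + (M * Real.exp M + 1) * u := by
        have h1 := mul_le_mul_of_nonneg_right hmono hf1
        have h2 : Real.exp (M * ρ * u) * (M * u) ≤ (M * Real.exp M + 1) * u := by
          nlinarith [mul_nonneg hM0 hu0, Real.exp_pos (M * ρ * u)]
        linarith
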